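/- Let A, B, C be nonempty finite subsets of F_q and λ ∈ F_q^*. Then |ABC + λ|² ≤ |AB + λ| · |BC + λ| · |CA + λ|, where for sets X, Y one writes XY = {xy : x∈X, y∈Y} and X + λ = {x + λ : x ∈ X}. -/

import Mathlib

open Finset
open scoped Pointwise


private lemma mul_singleton_eq_image {M : Type*} [DecidableEq M] [Mul M] (S : Finset M) (a : M) :
    S * {a} = S.image (· * a) := Finset.image₂_singleton_right

private lemma singleton_mul_eq_image {M : Type*} [DecidableEq M] [Mul M] (S : Finset M) (a : M) :
    ({a} : Finset M) * S = S.image (a * ·) := Finset.image₂_singleton_left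

/-- Arithmetic core: Cauchy–Schwarz / AM–GM step for the induction. -/
private lemma gmr_arith (s d x y z e f : ℕ) (h1 : s ^ 2 ≤ x * y * z)
    (h2 : d ≤ x) (h3 : d ≤ f * e) : (d + s) ^ 2 ≤ x * (e + y) * (f + z) := by
  have hd2 : d ^ 2 ≤ x * (e * f) := by
    calc d ^ 2 = d * d := sq d
    _ ≤ x * (f * e) := Nat.mul_le_mul h2 h3
    _ = x * (e * f) := by ring
  have key : (2 * (s * d)) ^ 2 ≤ (x * (y * f) + x * (e * z)) ^ 2 := by
    nlinarith [two_mul_le_add_sq (x * (y * f)) (x * (e * z)), Nat.mul_le_mul h1 hd2]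
  have key2 : 2 * (s * d) ≤ x * (y * f) + x * (e * z) := by
    by_contra hcon
    push_neg at hcon
    exact absurd key (not_le.2 (Nat.pow_lt_pow_left hcon (by norm_num)))
  nlinarith [key, key2, h1, hd2]

/-- GMR inequality in a commutative monoid, assuming the elements of `C` are
right-cancellable. Proof by induction on `C`. -/
private lemma gmr_monoid {M : Type*} [CommMonoid M] [DecidableEq M] :
    ∀ C A B : Finset M, A.Nonempty → B.Nonempty → C.Nonempty →
      (∀ x ∈ C, ∀ y z : M, y * x = z * x → y = z) →
      (A * B * C).card ^ 2 ≤ (A * B).card * (B * C).card * (C * A).card := by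
  intro C
  induction C using Finset.strongInduction with
  | _ C ih =>
    intro A B hA hB hC hc
    obtain ⟨x, hx⟩ := hC
    have hinj : Function.Injective (· * x) := fun y z h => hc x hx y z h
    have hinj' : Function.Injective (x * ·) := fun y z h =>
      hc x hx y z (by rwa [mul_comm y x, mul_comm z x])
    set C₀ := C.erase x with hC₀
    by_cases h₀ : C₀.Nonempty
    · -- inductive step
      have hCx : C = {x} ∪ C₀ := by
        rw [← Finset.insert_eq, Finset.insert_erase hx]
      set D := (A * B * {x}) \ (A * B * C₀) with hD
      set E := (B * {x}) \ (B * C₀) with hE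
      set E' := ({x} * A) \ (C₀ * A) with hE'
      have cS : (A * B * C).card = D.card + (A * B * C₀).card := by
        rw [hD, Finset.card_sdiff_add_card]
        congr 1
        rw [hCx, Finset.mul_union, Finset.union_comm]
      have cβ : (B * C).card = E.card + (B * C₀).card := by
        rw [hE, Finset.card_sdiff_add_card]
        congr 1
        rw [hCx, Finset.mul_union, Finset.union_comm]
      have cγ : (C * A).card = E'.card + (C₀ * A).card := by
        rw [hE', Finset.card_sdiff_add_card]
        congr 1
        rw [hCx, Finset.union_mul, Finset.union_comm]
      -- D is at most |A*B|
      have K1 : D.card ≤ (A * B).card := by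
        calc D.card ≤ (A * B * {x}).card := Finset.card_le_card Finset.sdiff_subset
        _ = ((A * B).image (· * x)).card := by rw [mul_singleton_eq_image]
        _ ≤ (A * B).card := Finset.card_image_le
      -- D injects into E' * E
      have himg : D.image (· * x) ⊆ E' * E := by
        intro w hw
        obtain ⟨d, hd, rfl⟩ := Finset.mem_image.1 hw
        obtain ⟨hd1, hd2⟩ := Finset.mem_sdiff.1 hd
        obtain ⟨p, hp, t, ht, rfl⟩ := Finset.mem_mul.1 hd1
        obtain rfl : x = t := (Finset.mem_singleton.1 ht).symm
        obtain ⟨a, ha, b, hb, rfl⟩ := Finset.mem_mul.1 hp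
        have hax : a * x ∈ E' := by
          rw [hE', Finset.mem_sdiff]
          constructor
          · have := Finset.mul_mem_mul (Finset.mem_singleton_self x) ha
            rwa [mul_comm x a] at this
          · intro hmem
            obtain ⟨c, hcc, a', ha', hca⟩ := Finset.mem_mul.1 hmem
            apply hd2
            have hm : a' * b * c ∈ A * B * C₀ :=
              Finset.mul_mem_mul (Finset.mul_mem_mul ha' hb) hcc
            have heq : a' * b * c = a * b * x := by
              calc a' * b * c = c * a' * b := by ac_rfl
              _ = a * x * b := by rw [hca]
              _ = a * b * x := by ac_rfl
            rwa [heq] at hm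
        have hbx : b * x ∈ E := by
          rw [hE, Finset.mem_sdiff]
          constructor
          · exact Finset.mul_mem_mul hb (Finset.mem_singleton_self x)
          · intro hmem
            obtain ⟨b', hb', c, hcc, hbc⟩ := Finset.mem_mul.1 hmem
            apply hd2
            have hm : a * b' * c ∈ A * B * C₀ :=
              Finset.mul_mem_mul (Finset.mul_mem_mul ha hb') hcc
            have heq : a * b' * c = a * b * x := by
              calc a * b' * c = a * (b' * c) := by ac_rfl
              _ = a * (b * x) := by rw [hbc]
              _ = a * b * x := by ac_rfl
            rwa [heq] at hm
        have : (a * x) * (b * x) ∈ E' * E := Finset.mul_mem_mul hax hbx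
        have heq : (a * x) * (b * x) = a * b * x * x := by ac_rfl
        rwa [heq] at this
      have K2 : D.card ≤ E'.card * E.card := by
        calc D.card = (D.image (· * x)).card :=
              (Finset.card_image_of_injective D hinj).symm
        _ ≤ (E' * E).card := Finset.card_le_card himg
        _ ≤ E'.card * E.card := Finset.card_mul_le
      -- induction hypothesis
      have hIH := ih C₀ (Finset.erase_ssubset hx) A B hA hB h₀
        (fun y hy => hc y (Finset.mem_of_mem_erase hy))
      rw [cS, cβ, cγ]
      exact gmr_arith _ _ _ _ _ _ _ hIH K1 K2
    · -- base case : C = {x}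
      have hCx : C = {x} := by
        apply Finset.eq_singleton_iff_unique_mem.2
        refine ⟨hx, fun y hy => ?_⟩
        by_contra hne
        exact h₀ ⟨y, Finset.mem_erase.2 ⟨hne, hy⟩⟩
      subst hCx
      have c1 : (A * B * {x}).card = (A * B).card := by
        rw [mul_singleton_eq_image, Finset.card_image_of_injective _ hinj]
      have c2 : (B * {x}).card = B.card := by
        rw [mul_singleton_eq_image, Finset.card_image_of_injective _ hinj]
      have c3 : (({x} : Finset M) * A).card = A.card := by
        rw [singleton_mul_eq_image, Finset.card_image_of_injective _ hinj']
      rw [c1, c2, c3]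
      have h := Finset.card_mul_le (s := A) (t := B)
      calc (A * B).card ^ 2 = (A * B).card * (A * B).card := sq _
      _ ≤ (A * B).card * (A.card * B.card) := Nat.mul_le_mul_left _ h
      _ = (A * B).card * B.card * A.card := by ring

/-- GMR inequality over a field (handling the non-cancellable zero). -/
private lemma gmr_field {F : Type*} [Field F] [DecidableEq F]
    (A B C : Finset F) (hA : A.Nonempty) (hB : B.Nonempty) (hC : C.Nonempty) :
    (A * B * C).card ^ 2 ≤ (A * B).card * (B * C).card * (C * A).card := by
  by_cases h0 : (0 : F) ∈ C
  · set C' := C.erase (0 : F) with hC'def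
    have hCx : C = {(0 : F)} ∪ C' := by
      rw [← Finset.insert_eq, Finset.insert_erase h0]
    have AB0 : A * B * {(0 : F)} = {(0 : F)} := by
      rw [mul_singleton_eq_image,
        show ((· * (0:F)) : F → F) = fun _ => (0:F) from funext fun y => mul_zero y,
        Finset.image_const (hA.mul hB) 0]
    have B0 : B * {(0 : F)} = {(0 : F)} := by
      rw [mul_singleton_eq_image,
        show ((· * (0:F)) : F → F) = fun _ => (0:F) from funext fun y => mul_zero y,
        Finset.image_const hB 0]
    have A0 : ({(0 : F)} : Finset F) * A = {(0 : F)} := by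
      rw [singleton_mul_eq_image,
        show (((0:F) * ·) : F → F) = fun _ => (0:F) from funext fun y => zero_mul y,
        Finset.image_const hA 0]
    by_cases h₀ : C'.Nonempty
    · set S' := A * B * C' with hS'
      set d₀ := (({(0:F)} : Finset F) \ S').card with hd₀
      set e₀ := (({(0:F)} : Finset F) \ (B * C')).card with he₀
      set f₀ := (({(0:F)} : Finset F) \ (C' * A)).card with hf₀
      have cS : (A * B * C).card = d₀ + S'.card := by
        rw [hd₀, Finset.card_sdiff_add_card]
        congr 1
        rw [hCx, Finset.mul_union, AB0, Finset.union_comm]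
      have cβ : (B * C).card = e₀ + (B * C').card := by
        rw [he₀, Finset.card_sdiff_add_card]
        congr 1
        rw [hCx, Finset.mul_union, B0, Finset.union_comm]
      have cγ : (C * A).card = f₀ + (C' * A).card := by
        rw [hf₀, Finset.card_sdiff_add_card]
        congr 1
        rw [hCx, Finset.union_mul, A0, Finset.union_comm]
      have K1 : d₀ ≤ (A * B).card := by
        calc d₀ ≤ ({(0:F)} : Finset F).card := Finset.card_le_card Finset.sdiff_subset
        _ = 1 := Finset.card_singleton _
        _ ≤ (A * B).card := Finset.card_pos.2 (hA.mul hB)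
      have K2 : d₀ ≤ f₀ * e₀ := by
        by_cases hz : (0 : F) ∈ S'
        · have : ({(0:F)} : Finset F) \ S' = ∅ := by
            rw [Finset.sdiff_eq_empty_iff_subset]
            exact Finset.singleton_subset_iff.2 hz
          simp [hd₀, this]
        · have hBC : (0 : F) ∉ B * C' := by
            intro hmem
            obtain ⟨b, hb, c, hcc, hbc⟩ := Finset.mem_mul.1 hmem
            apply hz
            obtain ⟨a, ha⟩ := hA
            have : (a * b) * c = 0 := by rw [mul_assoc, hbc, mul_zero]
            have hm : (a * b) * c ∈ S' := Finset.mul_mem_mul (Finset.mul_mem_mul ha hb) hcc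
            rwa [this] at hm
          have hCA : (0 : F) ∉ C' * A := by
            intro hmem
            obtain ⟨c, hcc, a, ha, hca⟩ := Finset.mem_mul.1 hmem
            apply hz
            obtain ⟨b, hb⟩ := hB
            have : (a * b) * c = 0 := by
              calc (a * b) * c = (c * a) * b := by ring
              _ = 0 := by rw [hca, zero_mul]
            have hm : (a * b) * c ∈ S' := Finset.mul_mem_mul (Finset.mul_mem_mul ha hb) hcc
            rwa [this] at hm
          have he1 : e₀ = 1 := by
            rw [he₀, Finset.sdiff_eq_self_of_disjoint (by
              simpa using hBC), Finset.card_singleton]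
          have hf1 : f₀ = 1 := by
            rw [hf₀, Finset.sdiff_eq_self_of_disjoint (by
              simpa using hCA), Finset.card_singleton]
          have hd1 : d₀ ≤ 1 := by
            calc d₀ ≤ ({(0:F)} : Finset F).card := Finset.card_le_card Finset.sdiff_subset
            _ = 1 := Finset.card_singleton _
          rw [he1, hf1]; simpa using hd1
      have hIH : S'.card ^ 2 ≤ (A * B).card * (B * C').card * (C' * A).card := by
        apply gmr_monoid C' A B hA hB h₀
        intro y hy u v huv
        have hy0 : y ≠ 0 := Finset.ne_of_mem_erase hy
        exact mul_right_cancel₀ hy0 huv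
      rw [cS, cβ, cγ]
      exact gmr_arith _ _ _ _ _ _ _ hIH K1 K2
    · -- C = {0}
      have hC0 : C = {(0 : F)} := by
        apply Finset.eq_singleton_iff_unique_mem.2
        refine ⟨h0, fun y hy => ?_⟩
        by_contra hne
        exact h₀ ⟨y, Finset.mem_erase.2 ⟨hne, hy⟩⟩
      subst hC0
      rw [AB0]
      have h1 : 1 ≤ (A * B).card := Finset.card_pos.2 (hA.mul hB)
      have h2 : 1 ≤ (B * ({(0:F)} : Finset F)).card := Finset.card_pos.2 (hB.mul ⟨_, Finset.mem_singleton_self _⟩)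
      have h3 : 1 ≤ (({(0:F)} : Finset F) * A).card :=
        Finset.card_pos.2 (Finset.Nonempty.mul ⟨_, Finset.mem_singleton_self _⟩ hA)
      calc ({(0:F)} : Finset F).card ^ 2 = 1 := by simp
      _ ≤ (A * B).card * (B * {(0:F)}).card * (({(0:F)} : Finset F) * A).card := by
          exact Nat.one_le_iff_ne_zero.2 (Nat.mul_pos (Nat.mul_pos h1 h2) h3).ne'
  · -- 0 ∉ C : all elements of C are cancellable
    apply gmr_monoid C A B hA hB hC
    intro y hy u v huv
    have hy0 : y ≠ 0 := fun h => h0 (h ▸ hy)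
    exact mul_right_cancel₀ hy0 huv

/-- Gyarmati–Matolcsi–Ruzsa type inequality for shifted triple products. -/
theorem shifted_triple_product_inequality
    (F : Type*) [Field F] [Fintype F] [DecidableEq F]
    (A B C : Finset F) (hA : A.Nonempty) (hB : B.Nonempty) (hC : C.Nonempty)
    (lam : F) (hlam : lam ≠ 0) :
    ((Finset.image₂ (· * ·) (Finset.image₂ (· * ·) A B) C).image (· + lam)).card ^ 2 ≤
      ((Finset.image₂ (· * ·) A B).image (· + lam)).card *
        ((Finset.image₂ (· * ·) B C).image (· + lam)).card *
        ((Finset.image₂ (· * ·) C A).image (· + lam)).card := by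
  have hinj : Function.Injective (· + lam) := add_left_injective lam
  rw [Finset.card_image_of_injective _ hinj, Finset.card_image_of_injective _ hinj,
    Finset.card_image_of_injective _ hinj, Finset.card_image_of_injective _ hinj]
  have e1 : Finset.image₂ (· * ·) A B = A * B := rfl
  have e2 : Finset.image₂ (· * ·) B C = B * C := rfl
  have e3 : Finset.image₂ (· * ·) C A = C * A := rfl
  have e4 : Finset.image₂ (· * ·) (Finset.image₂ (· * ·) A B) C = A * B * C := rfl
  rw [e4, e1, e2, e3]
  exact gmr_field A B C hA hB hC
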